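/- Let n ≥ 3 and let C_n be the cycle graph of length n. Then v(J(C_n)) = ⌊n/2⌋. -/

import Mathlib

open MvPolynomial CategoryTheory

noncomputable section

/-- A set of vertices is a vertex cover if it meets every edge. -/
def IsVertexCover {V : Type} (G : SimpleGraph V) (C : Set V) : Prop :=
  ∀ ⦃u v : V⦄, G.Adj u v → u ∈ C ∨ v ∈ C

/-- A vertex cover minimal with respect to inclusion. -/
def IsMinimalVertexCover {V : Type} (G : SimpleGraph V) (C : Set V) : Prop :=
  IsVertexCover G C ∧ ∀ C' ⊆ C, IsVertexCover G C' → C' = C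

/-- `α₀(G)`: the minimum cardinality of a vertex cover of `G`. -/
def coverNumber {V : Type} (G : SimpleGraph V) : ℕ :=
  sInf {k | ∃ C : Set V, IsVertexCover G C ∧ C.ncard = k}

/-- `bight(I(G))`: the maximum cardinality of a minimal vertex cover of `G`. -/
def bigHeight {V : Type} (G : SimpleGraph V) : ℕ :=
  sSup {k | ∃ C : Set V, IsMinimalVertexCover G C ∧ C.ncard = k}

/-- The edge ideal `I(G) ⊆ K[x_v : v ∈ V]`, generated by the monomials
`x_u * x_v` over the edges `{u,v}` of `G`. -/
def edgeIdeal (K : Type) [Field K] {V : Type} (G : SimpleGraph V) :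
    Ideal (MvPolynomial V K) :=
  Ideal.span {m | ∃ u v : V, G.Adj u v ∧ m = X u * X v}

/-- The cover ideal `J(G) = ⋂_{{u,v} ∈ E(G)} ⟨x_u, x_v⟩`. -/
def coverIdeal (K : Type) [Field K] {V : Type} (G : SimpleGraph V) :
    Ideal (MvPolynomial V K) :=
  ⨅ (u : V) (v : V) (_ : G.Adj u v), Ideal.span {X u, X v}

/-- The v-number of a graded ideal `I`: the least `d ≥ 0` such that there is a
homogeneous polynomial `f` of degree `d` with `I : f` a prime ideal. -/
def vNumber {K : Type} [Field K] {V : Type} (I : Ideal (MvPolynomial V K)) : ℕ :=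
  sInf {d | ∃ f : MvPolynomial V K, f.IsHomogeneous d ∧
    (I.colon (Ideal.span {f})).IsPrime}

/-- The homogeneous maximal ideal `⟨x_1, …, x_n⟩` of the polynomial ring. -/
def maxIdeal (K : Type) [Field K] (V : Type) : Ideal (MvPolynomial V K) :=
  Ideal.span (Set.range (X : V → MvPolynomial V K))

/-- The depth of the module `M` with respect to the ideal `J`: the supremum of
the lengths of regular sequences on `M` consisting of elements of `J`. -/
def mdepth {R : Type} [CommRing R] (J : Ideal R) (M : Type) [AddCommGroup M]
    [Module R M] : ℕ :=
  sSup {k | ∃ rs : List R, rs.length = k ∧ (∀ r ∈ rs, r ∈ J) ∧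
    RingTheory.Sequence.IsRegular M rs}

/-- The projective dimension of an `R`-module `M`, characterized by the
vanishing of `Ext^i(M, N)` for all `i > d` and all modules `N`. -/
def projDim (R : Type) [CommRing R] (M : ModuleCat.{0} R) : ℕ :=
  sInf {d : ℕ | ∀ (N : ModuleCat.{0} R) (i : ℕ), d < i →
    Subsingleton (((Ext R (ModuleCat.{0} R) i).obj (Opposite.op M)).obj N)}

namespace VNumAux

variable {K : Type} [Field K] {V : Type}

def kill (K : Type) [Field K] {V : Type} (s : Set V) [DecidablePred (· ∈ s)] :
    MvPolynomial V K →ₐ[K] MvPolynomial V K :=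
  aeval (fun i => if i ∈ s then 0 else X i)

lemma kill_X_mem (s : Set V) [DecidablePred (· ∈ s)] {i : V} (hi : i ∈ s) :
    kill K s (X i) = 0 := by simp [kill, hi]

lemma kill_X_not_mem (s : Set V) [DecidablePred (· ∈ s)] {i : V} (hi : i ∉ s) :
    kill K s (X i) = X i := by simp [kill, hi]

lemma span_X_image_eq_ker (s : Set V) [DecidablePred (· ∈ s)] :
    Ideal.span (X '' s : Set (MvPolynomial V K)) = RingHom.ker (kill K s) := by
  apply le_antisymm
  · rw [Ideal.span_le]
    rintro _ ⟨i, hi, rfl⟩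
    simpa [RingHom.mem_ker] using kill_X_mem (K := K) s hi
  · intro p hp
    have key : (Ideal.Quotient.mkₐ K (Ideal.span (X '' s : Set (MvPolynomial V K)))).comp
        (kill K s) = Ideal.Quotient.mkₐ K _ := by
      apply MvPolynomial.algHom_ext
      intro i
      by_cases hi : i ∈ s
      · rw [AlgHom.comp_apply, kill_X_mem s hi, map_zero, eq_comm]
        rw [Ideal.Quotient.mkₐ_eq_mk, Ideal.Quotient.eq_zero_iff_mem]
        exact Ideal.subset_span ⟨i, hi, rfl⟩
      · rw [AlgHom.comp_apply, kill_X_not_mem s hi]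
    have h2 := congrArg (fun g => g p) key
    simp only [AlgHom.comp_apply] at h2
    rw [RingHom.mem_ker] at hp
    rw [hp, map_zero] at h2
    rw [Ideal.Quotient.mkₐ_eq_mk, eq_comm, Ideal.Quotient.eq_zero_iff_mem] at h2
    exact h2

lemma isPrime_span_X_image (s : Set V) [DecidablePred (· ∈ s)] :
    (Ideal.span (X '' s : Set (MvPolynomial V K))).IsPrime := by
  rw [span_X_image_eq_ker]
  exact RingHom.ker_isPrime _

lemma isPrime_span_pair (a b : V) :
    (Ideal.span {X a, X b} : Ideal (MvPolynomial V K)).IsPrime := by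
  classical
  rw [← Set.image_pair]
  exact isPrime_span_X_image _

lemma X_not_mem_span_pair {a b w : V} (hwa : w ≠ a) (hwb : w ≠ b) :
    (X w : MvPolynomial V K) ∉ Ideal.span {X a, X b} := by
  classical
  rw [← Set.image_pair, span_X_image_eq_ker, RingHom.mem_ker,
    kill_X_not_mem _ (by simp [hwa, hwb])]
  exact X_ne_zero _

lemma prod_X_not_mem_span_pair {a b : V} {S : Finset V} (ha : a ∉ S) (hb : b ∉ S) :
    (∏ i ∈ S, (X i : MvPolynomial V K)) ∉ Ideal.span {X a, X b} := by
  classical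
  rw [← Set.image_pair, span_X_image_eq_ker, RingHom.mem_ker, map_prod]
  rw [Finset.prod_congr rfl (fun i hi => kill_X_not_mem (K := K) ({a, b} : Set V) (by
    simp only [Set.mem_insert_iff, Set.mem_singleton_iff]
    rintro (rfl | rfl)
    exacts [ha hi, hb hi]))]
  exact Finset.prod_ne_zero_iff.mpr (fun i _ => X_ne_zero _)

lemma coverIdeal_cycle {n : ℕ} [NeZero n] (hn : 3 ≤ n) :
    coverIdeal K (SimpleGraph.cycleGraph n) =
      ⨅ i : Fin n, Ideal.span {X i, X (i + 1)} := by
  obtain ⟨m, rfl⟩ : ∃ m, n = m + 2 := ⟨n - 2, by omega⟩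
  unfold coverIdeal
  apply le_antisymm
  · refine le_iInf fun i => ?_
    have hadj : (SimpleGraph.cycleGraph (m + 2)).Adj i (i + 1) := by
      rw [SimpleGraph.cycleGraph_adj]
      right
      simp
    exact iInf_le_of_le i (iInf_le_of_le (i + 1) (iInf_le _ hadj))
  · refine le_iInf fun u => le_iInf fun v => le_iInf fun h => ?_
    rw [SimpleGraph.cycleGraph_adj] at h
    rcases h with h | h
    · have huv : u = v + 1 := by rwa [sub_eq_iff_eq_add'] at h
      subst huv
      refine iInf_le_of_le v (le_of_eq ?_)
      rw [Set.pair_comm]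
    · have hvu : v = u + 1 := by rwa [sub_eq_iff_eq_add'] at h
      subst hvu
      exact iInf_le _ u


lemma upper {n : ℕ} (hn : 3 ≤ n) :
    ∃ f : MvPolynomial (Fin n) K, f.IsHomogeneous (n / 2) ∧
      ((coverIdeal K (SimpleGraph.cycleGraph n)).colon (Ideal.span {f})).IsPrime := by
  classical
  haveI : NeZero n := ⟨by omega⟩
  have hone : (1 : Fin n).val = 1 := by rw [Fin.val_one', Nat.mod_eq_of_lt (by omega : 1 < n)]
  set S : Finset (Fin n) :=
    (Finset.range (n / 2)).image
      (fun j => (⟨min (2 * j + 2) (n - 1), by omega⟩ : Fin n)) with hS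
  have hmemS : ∀ i : Fin n, i ∈ S ↔ ∃ j < n / 2, i.val = min (2 * j + 2) (n - 1) := by
    intro i
    simp only [hS, Finset.mem_image, Finset.mem_range]
    constructor
    · rintro ⟨j, hj, rfl⟩
      exact ⟨j, hj, rfl⟩
    · rintro ⟨j, hj, hv⟩
      exact ⟨j, hj, Fin.ext hv.symm⟩
  have hvalS : ∀ i ∈ S, 2 ≤ i.val ∧ i.val ≤ n - 1 := by
    intro i hi
    obtain ⟨j, hj, hv⟩ := (hmemS i).1 hi
    omega
  have hmemS' : ∀ (v : ℕ) (hv : v < n), 2 ≤ v → v ≤ n - 1 → (v % 2 = 0 ∨ v = n - 1) →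
      (⟨v, hv⟩ : Fin n) ∈ S := by
    intro v hv h2 hle hpar
    rw [hmemS]
    rcases eq_or_ne v (n - 1) with rfl | hne
    · refine ⟨n / 2 - 1, by omega, ?_⟩
      show n - 1 = min (2 * (n / 2 - 1) + 2) (n - 1)
      omega
    · refine ⟨(v - 2) / 2, by omega, ?_⟩
      show v = min (2 * ((v - 2) / 2) + 2) (n - 1)
      omega
  have hcardS : S.card = n / 2 := by
    rw [hS, Finset.card_image_of_injOn, Finset.card_range]
    intro a ha b hb hab
    simp only [Finset.coe_range, Set.mem_Iio] at ha hb
    have hv : min (2 * a + 2) (n - 1) = min (2 * b + 2) (n - 1) := congrArg Fin.val hab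
    omega
  set f : MvPolynomial (Fin n) K := ∏ i ∈ S, X i with hf
  have homog : f.IsHomogeneous (n / 2) := by
    have h1 : f.IsHomogeneous (∑ _i ∈ S, 1) :=
      MvPolynomial.IsHomogeneous.prod S _ _ (fun i _ => isHomogeneous_X _ _)
    simpa [hcardS] using h1
  have h0S : (0 : Fin n) ∉ S := by
    intro h
    have := (hvalS 0 h).1
    simp at this
  have h1S : (1 : Fin n) ∉ S := by
    intro h
    have := (hvalS 1 h).1
    rw [hone] at this
    omega
  have hcover : ∀ i : Fin n, i ≠ 0 → ∃ a ∈ S, a = i ∨ a = i + 1 := by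
    intro i hi
    have hi0 : i.val ≠ 0 := by
      intro h
      exact hi (Fin.ext (by simp [h]))
    by_cases hlast : i.val = n - 1
    · have h := hmemS' i.val i.isLt (by omega) (by omega) (Or.inr hlast)
      rw [Fin.eta] at h
      exact ⟨i, h, Or.inl rfl⟩
    · by_cases hpar : i.val % 2 = 0
      · have h := hmemS' i.val i.isLt (by omega) (by omega) (Or.inl hpar)
        rw [Fin.eta] at h
        exact ⟨i, h, Or.inl rfl⟩
      · have hlt : i.val + 1 < n := by have := i.isLt; omega
        have hvadd : (i + 1).val = i.val + 1 := by
          rw [Fin.add_def]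
          show (i.val + (1 : Fin n).val) % n = i.val + 1
          rw [hone]
          exact Nat.mod_eq_of_lt hlt
        have h := hmemS' (i.val + 1) hlt (by omega) (by omega) (Or.inl (by omega))
        have heq : (⟨i.val + 1, hlt⟩ : Fin n) = i + 1 := Fin.ext (by rw [hvadd])
        rw [heq] at h
        exact ⟨i + 1, h, Or.inr rfl⟩
  have hJ : coverIdeal K (SimpleGraph.cycleGraph n) =
      ⨅ i : Fin n, Ideal.span {X i, X (i + 1)} := coverIdeal_cycle hn
  have hmul : ∀ c : Fin n, c = 0 ∨ c = 1 →
      X c * f ∈ ⨅ i : Fin n, Ideal.span {X (i : Fin n), X (i + 1)} := by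
    intro c hc
    rw [Submodule.mem_iInf]
    intro i
    by_cases hi : i = 0
    · subst hi
      apply Ideal.mul_mem_right
      rcases hc with rfl | rfl
      · exact Ideal.subset_span (Set.mem_insert _ _)
      · rw [zero_add]
        exact Ideal.subset_span (Set.mem_insert_of_mem _ rfl)
    · obtain ⟨a, haS, hai⟩ := hcover i hi
      obtain ⟨g, hg⟩ : X a ∣ f := Finset.dvd_prod_of_mem _ haS
      rw [hg, show X c * (X a * g) = X a * (X c * g) by ring]
      apply Ideal.mul_mem_right
      rcases hai with rfl | rfl
      · exact Ideal.subset_span (Set.mem_insert _ _)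
      · exact Ideal.subset_span (Set.mem_insert_of_mem _ rfl)
  have hnotmem : f ∉ Ideal.span {X (0 : Fin n), X 1} :=
    prod_X_not_mem_span_pair h0S h1S
  have hcolon : (coverIdeal K (SimpleGraph.cycleGraph n)).colon (Ideal.span {f}) =
      Ideal.span {X (0 : Fin n), X 1} := by
    rw [hJ]
    apply le_antisymm
    · intro r hr
      rw [Ideal.mem_colon_span_singleton] at hr
      have h01 : r * f ∈ Ideal.span {X (0 : Fin n), X (0 + 1)} :=
        (Submodule.mem_iInf _).1 hr 0
      rw [zero_add] at h01
      exact ((isPrime_span_pair _ _).mem_or_mem h01).resolve_right hnotmem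
    · rw [Ideal.span_le]
      intro x hx
      simp only [Set.mem_insert_iff, Set.mem_singleton_iff] at hx
      rcases hx with rfl | rfl
      · rw [SetLike.mem_coe, Ideal.mem_colon_span_singleton]
        exact hmul 0 (Or.inl rfl)
      · rw [SetLike.mem_coe, Ideal.mem_colon_span_singleton]
        exact hmul 1 (Or.inr rfl)
  exact ⟨f, homog, by rw [hcolon]; exact isPrime_span_pair _ _⟩


lemma lower {n : ℕ} (hn : 3 ≤ n) {d : ℕ} {f : MvPolynomial (Fin n) K}
    (hf : f.IsHomogeneous d)
    (hp : ((coverIdeal K (SimpleGraph.cycleGraph n)).colon (Ideal.span {f})).IsPrime) :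
    n / 2 ≤ d := by
  classical
  haveI : NeZero n := ⟨by omega⟩
  have hone : (1 : Fin n).val = 1 := by
    rw [Fin.val_one', Nat.mod_eq_of_lt (by omega : 1 < n)]
  have hmod : ∀ x : ℕ, x < 2 * n → x % n = if x < n then x else x - n := by
    intro x hx
    split_ifs with h
    · exact Nat.mod_eq_of_lt h
    · rw [Nat.mod_eq_sub_mod (by omega), Nat.mod_eq_of_lt (by omega)]
  set P : Fin n → Ideal (MvPolynomial (Fin n) K) :=
    fun i => Ideal.span {X i, X (i + 1)} with hP
  have hJ : coverIdeal K (SimpleGraph.cycleGraph n) = ⨅ i, P i := coverIdeal_cycle hn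
  rw [hJ] at hp
  set Q := (⨅ i, P i).colon (Ideal.span {f}) with hQ
  have hf0 : f ≠ 0 := by
    rintro rfl
    apply hp.ne_top
    rw [Ideal.eq_top_iff_one, Ideal.mem_colon_span_singleton, mul_zero]
    exact Submodule.zero_mem _
  have hJQ : (⨅ i, P i) ≤ Q := by
    intro r hr
    rw [Ideal.mem_colon_span_singleton]
    exact Ideal.mul_mem_right f _ hr
  obtain ⟨i₀, -, hi₀⟩ : ∃ i ∈ Finset.univ, P i ≤ Q := by
    rw [← hp.prod_le]
    calc (∏ i ∈ Finset.univ, P i) ≤ Finset.univ.inf P := Ideal.prod_le_inf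
    _ = ⨅ i, P i := by simp [Finset.inf_eq_iInf]
    _ ≤ Q := hJQ
  have hXf : ∀ w : Fin n, w = i₀ ∨ w = i₀ + 1 → X w * f ∈ ⨅ i, P i := by
    intro w hw
    rw [← Ideal.mem_colon_span_singleton]
    apply hi₀
    rcases hw with rfl | rfl
    · exact Ideal.subset_span (Set.mem_insert _ _)
    · exact Ideal.subset_span (Set.mem_insert_of_mem _ rfl)
  have hA : ∀ a : Fin n, a + 1 ≠ a := by
    intro a h
    have hv := congrArg Fin.val h
    rw [Fin.add_def] at hv
    have hv' : (a.val + (1 : Fin n).val) % n = a.val := hv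
    rw [hone, hmod _ (by have := a.isLt; omega)] at hv'
    have := a.isLt
    split_ifs at hv' <;> omega
  have hB : ∀ a : Fin n, a + 1 + 1 ≠ a := by
    intro a h
    have hv := congrArg Fin.val h
    rw [Fin.add_def] at hv
    have hv' : ((a + 1).val + (1 : Fin n).val) % n = a.val := hv
    rw [Fin.add_def] at hv'
    have hv'' : ((a.val + (1 : Fin n).val) % n + (1 : Fin n).val) % n = a.val := hv'
    rw [hone, Nat.mod_add_mod, hmod _ (by have := a.isLt; omega)] at hv''
    have := a.isLt
    split_ifs at hv'' <;> omega
  have hff : ∀ j : Fin n, j ≠ i₀ → f ∈ P j := by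
    intro j hj
    obtain ⟨w, hw12, hwj, hwj1⟩ :
        ∃ w : Fin n, (w = i₀ ∨ w = i₀ + 1) ∧ w ≠ j ∧ w ≠ j + 1 := by
      by_cases h1 : i₀ ≠ j ∧ i₀ ≠ j + 1
      · exact ⟨i₀, Or.inl rfl, h1.1, h1.2⟩
      · push_neg at h1
        have hij : i₀ = j + 1 := h1 (fun h => hj h.symm)
        refine ⟨i₀ + 1, Or.inr rfl, ?_, ?_⟩
        · rw [hij]
          exact fun h => hB j h
        · rw [hij]
          intro h
          exact hA (j + 1) h
    have hXw : (X w : MvPolynomial (Fin n) K) ∉ P j := X_not_mem_span_pair hwj hwj1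
    have hmem : X w * f ∈ P j := iInf_le P j (hXf w hw12)
    exact ((isPrime_span_pair j (j + 1)).mem_or_mem hmem).resolve_left hXw
  obtain ⟨m, hm⟩ : f.support.Nonempty :=
    Finset.nonempty_iff_ne_empty.mpr (fun h => hf0 (support_eq_empty.mp h))
  have hdeg : ∑ i ∈ m.support, m i = d := by
    have h1 : (Finsupp.weight 1) m = d := hf (mem_support_iff.mp hm)
    rw [show (Finsupp.weight 1 : (Fin n →₀ ℕ) →+ ℕ) = Finsupp.weight (fun _ => 1) from rfl,
      ← Finsupp.degree_eq_weight_one] at h1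
    exact h1
  have hcard_le : m.support.card ≤ d := by
    rw [← hdeg]
    calc m.support.card = ∑ _i ∈ m.support, 1 := by simp
    _ ≤ ∑ i ∈ m.support, m i :=
      Finset.sum_le_sum (fun i hi => Nat.one_le_iff_ne_zero.mpr (Finsupp.mem_support_iff.mp hi))
  have hcov : ∀ j : Fin n, j ≠ i₀ → j ∈ m.support ∨ j + 1 ∈ m.support := by
    intro j hj
    have h1 := hff j hj
    rw [hP] at h1
    simp only at h1
    rw [← Set.image_pair, mem_ideal_span_X_image] at h1
    obtain ⟨i, hi, hni⟩ := h1 m hm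
    simp only [Set.mem_insert_iff, Set.mem_singleton_iff] at hi
    rcases hi with rfl | rfl
    · exact Or.inl (Finsupp.mem_support_iff.mpr hni)
    · exact Or.inr (Finsupp.mem_support_iff.mpr hni)
  -- counting
  have hnpos : 0 < n := by omega
  set vtx : ℕ → Fin n := fun c => ⟨(i₀.val + c) % n, Nat.mod_lt _ hnpos⟩ with hvtx
  have hvtx_ne : ∀ c, 1 ≤ c → c ≤ n - 1 → vtx c ≠ i₀ := by
    intro c h1 h2 h
    have hv : (i₀.val + c) % n = i₀.val := congrArg Fin.val h
    have hlt := i₀.isLt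
    rw [hmod _ (by omega)] at hv
    split_ifs at hv <;> omega
  have hvtx_succ : ∀ c, vtx c + 1 = vtx (c + 1) := by
    intro c
    apply Fin.ext
    rw [Fin.add_def]
    show ((i₀.val + c) % n + (1 : Fin n).val) % n = (i₀.val + (c + 1)) % n
    rw [hone, Nat.mod_add_mod, Nat.add_assoc]
  have hvtx_inj : ∀ c c', 1 ≤ c → c ≤ n → 1 ≤ c' → c' ≤ n → vtx c = vtx c' → c = c' := by
    intro c c' h1 h2 h3 h4 h
    have hv : (i₀.val + c) % n = (i₀.val + c') % n := congrArg Fin.val h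
    have hlt := i₀.isLt
    rw [hmod _ (by omega), hmod _ (by omega)] at hv
    split_ifs at hv <;> omega
  have hcov' : ∀ c, 1 ≤ c → c ≤ n - 1 → vtx c ∈ m.support ∨ vtx (c + 1) ∈ m.support := by
    intro c h1 h2
    rcases hcov (vtx c) (hvtx_ne c h1 h2) with h | h
    · exact Or.inl h
    · right
      rwa [hvtx_succ] at h
  set w : ℕ → Fin n := fun t =>
    if vtx (2 * t + 1) ∈ m.support then vtx (2 * t + 1) else vtx (2 * t + 2) with hw
  have hws : ∀ t ∈ Finset.range (n / 2), w t ∈ m.support := by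
    intro t ht
    rw [Finset.mem_range] at ht
    rw [hw]
    simp only
    by_cases h' : vtx (2 * t + 1) ∈ m.support
    · rw [if_pos h']
      exact h'
    · rw [if_neg h']
      rcases hcov' (2 * t + 1) (by omega) (by omega) with h | h
      · exact absurd h h'
      · have e : 2 * t + 1 + 1 = 2 * t + 2 := by omega
        rwa [e] at h
  have hwinj : Set.InjOn w (Finset.range (n / 2)) := by
    intro t ht t' ht' h
    simp only [Finset.coe_range, Set.mem_Iio] at ht ht'
    have key : ∀ u, ∃ c, (c = 2 * u + 1 ∨ c = 2 * u + 2) ∧ w u = vtx c := by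
      intro u
      rw [hw]
      simp only
      split_ifs
      · exact ⟨2 * u + 1, Or.inl rfl, rfl⟩
      · exact ⟨2 * u + 2, Or.inr rfl, rfl⟩
    obtain ⟨c, hc, hwc⟩ := key t
    obtain ⟨c', hc', hwc'⟩ := key t'
    have heq : vtx c = vtx c' := by rw [← hwc, ← hwc', h]
    have := hvtx_inj c c' (by omega) (by omega) (by omega) (by omega) heq
    omega
  have hcount : n / 2 ≤ m.support.card := by
    calc n / 2 = (Finset.range (n / 2)).card := (Finset.card_range _).symm
    _ ≤ m.support.card := Finset.card_le_card_of_injOn w hws hwinj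
  omega

end VNumAux

/-- For the cycle `C_n` (`n ≥ 3`), `v(J(C_n)) = ⌊n/2⌋`. -/
theorem vNumber_coverIdeal_cycleGraph
    {K : Type} [Field K] (n : ℕ) (hn : 3 ≤ n) :
    vNumber (coverIdeal K (SimpleGraph.cycleGraph n)) = n / 2 := by
  obtain ⟨f, hf, hp⟩ := VNumAux.upper (K := K) hn
  unfold vNumber
  refine le_antisymm (Nat.sInf_le ⟨f, hf, hp⟩) ?_
  refine le_csInf ⟨n / 2, f, hf, hp⟩ ?_
  rintro d ⟨g, hg, hgp⟩
  exact VNumAux.lower hn hg hgp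

end
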